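/- The map Φ(p₁, q₁, p₂, q₂) = (√(2(p₁+1)/π) · e^{iπ(q₁+1)}, √(2(p₂+1)/π) · e^{iπ(q₂+1)}) defines a symplectic embedding of the interior of the lagrangian bidisk P_L into the polydisk P(4,4); that is, Φ is injective on int(P_L), pulls back the standard symplectic form Σ dx_i ∧ dy_i on ℂ² to Σ dp_i ∧ dq_i, and its image satisfies π|z₁|² < 4 and π|z₂|² < 4. -/

import Mathlib

open Real

/-- The planar component map of the embedding of the lagrangian bidisk into P(4,4). -/
noncomputable def phiMap (z : ℝ × ℝ) : ℝ × ℝ :=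
  (Real.sqrt (2*(z.1+1)/π) * Real.cos (π*(z.2+1)),
   Real.sqrt (2*(z.1+1)/π) * Real.sin (π*(z.2+1)))

/-- The full map Φ(p₁,q₁,p₂,q₂) = (φ(p₁,q₁), φ(p₂,q₂)); here w = ((p₁,q₁),(p₂,q₂)). -/
noncomputable def PhiMap (w : (ℝ × ℝ) × (ℝ × ℝ)) : (ℝ × ℝ) × (ℝ × ℝ) :=
  (phiMap w.1, phiMap w.2)

/-- The interior of the lagrangian bidisk, with coordinates ((p₁,q₁),(p₂,q₂)). -/
def intPL : Set ((ℝ × ℝ) × (ℝ × ℝ)) :=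
  {w | w.1.1^2 + w.2.1^2 < 1 ∧ w.1.2^2 + w.2.2^2 < 1}

lemma clm_det (L : ℝ × ℝ →L[ℝ] ℝ × ℝ) :
    L.det = (L (1,0)).1 * (L (0,1)).2 - (L (0,1)).1 * (L (1,0)).2 := by
  rw [ContinuousLinearMap.det, ← LinearMap.det_toMatrix (Module.Basis.finTwoProd ℝ), Matrix.det_fin_two]
  simp [LinearMap.toMatrix_apply, Module.Basis.finTwoProd]

lemma phi_norm_sq (z : ℝ × ℝ) (h1 : -1 < z.1) :
    (phiMap z).1 ^ 2 + (phiMap z).2 ^ 2 = 2 * (z.1 + 1) / π := by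
  have hπ := Real.pi_pos
  have hx : 0 ≤ 2*(z.1+1)/π := by
    have : 0 < z.1 + 1 := by linarith
    positivity
  have hpyth := Real.sin_sq_add_cos_sq (π*(z.2+1))
  have hsq : Real.sqrt (2*(z.1+1)/π) ^ 2 = 2*(z.1+1)/π := Real.sq_sqrt hx
  simp only [phiMap]
  nlinarith [hsq, hpyth]

lemma phi_inj {p q p' q' : ℝ} (hp : -1 < p) (hp' : -1 < p')
    (hq : -1 < q) (hq1 : q < 1) (hq' : -1 < q') (hq1' : q' < 1)
    (h : phiMap (p, q) = phiMap (p', q')) : (p, q) = ((p', q') : ℝ × ℝ) := by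
  have hπ := Real.pi_pos
  -- equality of squared norms gives p = p'
  have hns : 2 * (p + 1) / π = 2 * (p' + 1) / π := by
    have := phi_norm_sq (p, q) hp
    have h2 := phi_norm_sq (p', q') hp'
    rw [h] at this
    exact (by simpa [h2] using this : _ = _).symm
  have hpp : p = p' := by
    field_simp at hns; linarith
  subst hpp
  -- now the radius is positive and common
  have hpp1 : 0 < p + 1 := by linarith
  set r := Real.sqrt (2*(p+1)/π) with hr
  have hrpos : 0 < r := Real.sqrt_pos.2 (by positivity)
  have hx : r * Real.cos (π*(q+1)) = r * Real.cos (π*(q'+1)) := congrArg Prod.fst h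
  have hy : r * Real.sin (π*(q+1)) = r * Real.sin (π*(q'+1)) := congrArg Prod.snd h
  have hc : Real.cos (π*(q+1)) = Real.cos (π*(q'+1)) := mul_left_cancel₀ (ne_of_gt hrpos) hx
  have hs : Real.sin (π*(q+1)) = Real.sin (π*(q'+1)) := mul_left_cancel₀ (ne_of_gt hrpos) hy
  have hcos1 : Real.cos (π*(q+1) - π*(q'+1)) = 1 := by
    rw [Real.cos_sub, hc, hs]
    nlinarith [Real.sin_sq_add_cos_sq (π*(q'+1))]
  have hsub : π*(q+1) - π*(q'+1) = 0 := by
    have hlb : -(2*π) < π*(q+1) - π*(q'+1) := by nlinarith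
    have hub : π*(q+1) - π*(q'+1) < 2*π := by nlinarith
    exact (Real.cos_eq_one_iff_of_lt_of_lt hlb hub).1 hcos1
  have : q = q' := by
    have : π * (q - q') = 0 := by ring_nf; ring_nf at hsub; linarith
    rcases mul_eq_zero.1 this with h' | h'
    · exact absurd h' (ne_of_gt hπ)
    · linarith
  simp [this]

lemma phi_fderiv_det (z : ℝ × ℝ) (h1 : -1 < z.1) : (fderiv ℝ phiMap z).det = 1 := by
  have hπ := Real.pi_pos
  set r := Real.sqrt (2*(z.1+1)/π) with hr
  have hz1 : 0 < z.1 + 1 := by linarith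
  have hxpos : 0 < 2*(z.1+1)/π := by positivity
  have hrpos : 0 < r := Real.sqrt_pos.2 hxpos
  have hin : HasDerivAt (fun p : ℝ => 2*(p+1)/π) (2*1/π) z.1 :=
    (((hasDerivAt_id z.1).add_const 1).const_mul 2).div_const π
  have hg : HasDerivAt (fun p : ℝ => Real.sqrt (2*(p+1)/π)) (1/(2*r) * (2*1/π)) z.1 :=
    (Real.hasDerivAt_sqrt (ne_of_gt hxpos)).comp z.1 hin
  have hG : HasFDerivAt (fun w : ℝ × ℝ => Real.sqrt (2*(w.1+1)/π))
      ((1/(2*r) * (2*1/π)) • ContinuousLinearMap.fst ℝ ℝ ℝ) z :=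
    hg.comp_hasFDerivAt z hasFDerivAt_fst
  have hth : HasDerivAt (fun q : ℝ => π*(q+1)) (π*1) z.2 :=
    ((hasDerivAt_id z.2).add_const 1).const_mul π
  have hC : HasFDerivAt (fun w : ℝ × ℝ => Real.cos (π*(w.2+1)))
      ((-Real.sin (π*(z.2+1)) * (π*1)) • ContinuousLinearMap.snd ℝ ℝ ℝ) z :=
    (((Real.hasDerivAt_cos _).comp z.2 hth)).comp_hasFDerivAt z hasFDerivAt_snd
  have hS : HasFDerivAt (fun w : ℝ × ℝ => Real.sin (π*(w.2+1)))
      ((Real.cos (π*(z.2+1)) * (π*1)) • ContinuousLinearMap.snd ℝ ℝ ℝ) z :=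
    (((Real.hasDerivAt_sin _).comp z.2 hth)).comp_hasFDerivAt z hasFDerivAt_snd
  have hPhi : HasFDerivAt phiMap _ z := HasFDerivAt.prodMk (hG.mul hC) (hG.mul hS)
  rw [hPhi.fderiv, clm_det]
  simp only [ContinuousLinearMap.prod_apply, ContinuousLinearMap.add_apply,
    ContinuousLinearMap.smul_apply, ContinuousLinearMap.coe_fst', ContinuousLinearMap.coe_snd',
    smul_eq_mul]
  rw [← hr]
  have hpyth := Real.sin_sq_add_cos_sq (π*(z.2+1))
  have hrne : r ≠ 0 := ne_of_gt hrpos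
  have hπne : π ≠ 0 := ne_of_gt hπ
  field_simp
  linear_combination (r^2*π^2) * hpyth

theorem stmt7 :
    Set.InjOn PhiMap intPL ∧
    (∀ z : ℝ × ℝ, -1 < z.1 → z.1 < 1 → (fderiv ℝ phiMap z).det = 1) ∧
    (∀ w ∈ intPL,
      π * ((PhiMap w).1.1^2 + (PhiMap w).1.2^2) < 4 ∧
      π * ((PhiMap w).2.1^2 + (PhiMap w).2.2^2) < 4) := by
  have hπ := Real.pi_pos
  have bounds : ∀ {a b : ℝ}, a^2 + b^2 < 1 → -1 < a ∧ a < 1 ∧ -1 < b ∧ b < 1 := by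
    intro a b hab
    refine ⟨?_, ?_, ?_, ?_⟩ <;> nlinarith [sq_nonneg a, sq_nonneg b]
  refine ⟨?_, fun z h1 _ => phi_fderiv_det z h1, ?_⟩
  · intro w hw w' hw' h
    obtain ⟨hp1l, hp1u, hp2l, hp2u⟩ := bounds hw.1
    obtain ⟨hq1l, hq1u, hq2l, hq2u⟩ := bounds hw.2
    obtain ⟨hp1l', hp1u', hp2l', hp2u'⟩ := bounds hw'.1
    obtain ⟨hq1l', hq1u', hq2l', hq2u'⟩ := bounds hw'.2
    have h1 : phiMap w.1 = phiMap w'.1 := congrArg Prod.fst h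
    have h2 : phiMap w.2 = phiMap w'.2 := congrArg Prod.snd h
    have e1 : w.1 = w'.1 := by
      have := phi_inj hp1l hp1l' hq1l hq1u hq1l' hq1u'
        (by simpa using h1)
      simpa using this
    have e2 : w.2 = w'.2 := by
      have := phi_inj hp2l hp2l' hq2l hq2u hq2l' hq2u'
        (by simpa using h2)
      simpa using this
    exact Prod.ext e1 e2
  · intro w hw
    obtain ⟨hp1l, hp1u, hp2l, hp2u⟩ := bounds hw.1
    constructor
    · have := phi_norm_sq w.1 hp1l
      have h4 : π * (2 * (w.1.1 + 1) / π) = 2 * (w.1.1 + 1) := by field_simp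
      simp only [PhiMap]
      rw [this, h4]
      linarith
    · have := phi_norm_sq w.2 hp2l
      have h4 : π * (2 * (w.2.1 + 1) / π) = 2 * (w.2.1 + 1) := by field_simp
      simp only [PhiMap]
      rw [this, h4]
      linarith
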